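/- In the adding-voters construction, if w is the unique fallback winner after adding a set W' of unregistered voters with ‖W'‖ ≤ k, then ‖W'‖ = k exactly: with ‖W'‖ ≤ k−2 candidate x has a strict majority at level 1, and with ‖W'‖ = k−1 candidates w and x tie with overall score k−1 each and no strict majority, so w is not the unique winner. -/
import Mathlib


/- Fallback voting framework.  A ballot is the linearly ordered list of a voter's
approved candidates (most preferred first); an election is a list of ballots. -/
namespace FV

variable {α : Type*} [DecidableEq α]

/-- The level-`i` score of candidate `c`: the number of voters who approve `c`
and rank `c` among their top `i` approved candidates. -/
def levelScore (V : List (List α)) (i : ℕ) (c : α) : ℕ :=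
  (V.filter (fun b => decide (c ∈ b.take i))).length

/-- The overall approval score of candidate `c`. -/
def score (V : List (List α)) (c : α) : ℕ :=
  (V.filter (fun b => decide (c ∈ b))).length

/-- `c` has a strict majority of approvals at level `i`. -/
def MajAt (V : List (List α)) (i : ℕ) (c : α) : Prop :=
  2 * levelScore V i c > V.length

/-- `c` is a fallback voting winner of the election with candidate set `Cs`
and voter list `V`:  either at the first level (up to `‖Cs‖`) at which some
candidate attains a strict majority, `c` has a strict majority and maximal
level score among strict-majority candidates; or no candidate ever attains a
strict majority and `c` has maximal overall approval score. -/
def FVWinner (Cs : Finset α) (V : List (List α)) (c : α) : Prop :=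
  c ∈ Cs ∧
    ((∃ i, 1 ≤ i ∧ i ≤ Cs.card ∧ MajAt V i c ∧
        (∀ j, j < i → ∀ d ∈ Cs, ¬ MajAt V j d) ∧
        (∀ d ∈ Cs, MajAt V i d → levelScore V i d ≤ levelScore V i c)) ∨
     ((∀ i, i ≤ Cs.card → ∀ d ∈ Cs, ¬ MajAt V i d) ∧
        ∀ d ∈ Cs, score V d ≤ score V c))

/-- `c` is the unique fallback voting winner. -/
def UniqueFVWinner (Cs : Finset α) (V : List (List α)) (c : α) : Prop :=
  FVWinner Cs V c ∧ ∀ d, FVWinner Cs V d → d = c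

end FV

/- The adding-voters construction of Erdélyi and Fellows.  Candidates are
`Sum (Fin n) Bool`: `Sum.inl b` is the vertex candidate for `b`, `Sum.inr
true` is `w` and `Sum.inr false` is `x`.  There are `k-1` registered voters
approving only `x`; the unregistered voter `wᵢ` approves the candidates of
`B − N_c[bᵢ]` (in a fixed order given by the enumeration `L`) followed by `w`.
Adding the voters indexed by `S` yields the voter list `addElection`. -/
namespace AV

def wc (n : ℕ) : Sum (Fin n) Bool := Sum.inr true
def xc (n : ℕ) : Sum (Fin n) Bool := Sum.inr false

/-- The ballot of unregistered voter `wᵢ`. -/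
def wballot {n : ℕ} (L : Fin n → List (Fin n)) (i : Fin n) : List (Sum (Fin n) Bool) :=
  (L i).map Sum.inl ++ [wc n]

/-- The voter list after adding the unregistered voters indexed by `S`. -/
def addElection {n : ℕ} (k : ℕ) (L : Fin n → List (Fin n)) (S : Finset (Fin n)) :
    List (List (Sum (Fin n) Bool)) :=
  List.replicate (k - 1) [xc n] ++ (S.sort (· ≤ ·)).map (wballot L)

end AV

namespace AVP
open AV FV

section Generic
variable {α : Type*} [DecidableEq α]

lemma len_filter_replicate {β : Type*} (m : ℕ) (a : β) (p : β → Bool) :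
    ((List.replicate m a).filter p).length = if p a then m else 0 := by
  induction m with
  | zero => simp
  | succ m ih =>
    rw [List.replicate_succ, List.filter_cons]
    split <;> simp_all

lemma score_append (A B : List (List α)) (c : α) :
    FV.score (A ++ B) c = FV.score A c + FV.score B c := by
  unfold FV.score
  rw [List.filter_append, List.length_append]

lemma score_replicate (m : ℕ) (a : List α) (c : α) :
    FV.score (List.replicate m a) c = if c ∈ a then m else 0 := by
  unfold FV.score
  rw [len_filter_replicate]
  simp

lemma score_eq_length (l : List (List α)) (c : α) (h : ∀ b ∈ l, c ∈ b) :
    FV.score l c = l.length := by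
  unfold FV.score
  rw [List.filter_eq_self.2 (fun b hb => by simpa using h b hb)]

lemma score_eq_zero (l : List (List α)) (c : α) (h : ∀ b ∈ l, c ∉ b) :
    FV.score l c = 0 := by
  unfold FV.score
  rw [List.filter_eq_nil_iff.2 (fun b hb => by simpa using h b hb)]
  rfl

lemma score_le_length (l : List (List α)) (c : α) :
    FV.score l c ≤ l.length :=
  List.length_filter_le _ _

lemma levelScore_append (A B : List (List α)) (i : ℕ) (c : α) :
    FV.levelScore (A ++ B) i c = FV.levelScore A i c + FV.levelScore B i c := by
  unfold FV.levelScore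
  rw [List.filter_append, List.length_append]

lemma levelScore_replicate (m : ℕ) (a : List α) (i : ℕ) (c : α) :
    FV.levelScore (List.replicate m a) i c = if c ∈ a.take i then m else 0 := by
  unfold FV.levelScore
  rw [len_filter_replicate]
  simp

lemma levelScore_le_length (l : List (List α)) (i : ℕ) (c : α) :
    FV.levelScore l i c ≤ l.length :=
  List.length_filter_le _ _

lemma ls_le_score (V : List (List α)) (i : ℕ) (c : α) :
    FV.levelScore V i c ≤ FV.score V c := by
  refine List.Sublist.length_le (List.monotone_filter_right V ?_)
  intro b hb
  simp only [decide_eq_true_eq] at *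
  exact List.mem_of_mem_take hb

end Generic

variable {n k : ℕ}

lemma len_addElection (L : Fin n → List (Fin n)) (S : Finset (Fin n)) :
    (AV.addElection k L S).length = (k - 1) + S.card := by
  simp [AV.addElection]

lemma score_wballots (L : Fin n → List (Fin n)) (S : Finset (Fin n))
    (c : Sum (Fin n) Bool) :
    FV.score ((S.sort (· ≤ ·)).map (AV.wballot L)) c ≤ S.card := by
  have h := score_le_length ((S.sort (· ≤ ·)).map (AV.wballot L)) c
  simpa using h

lemma score_x (L : Fin n → List (Fin n)) (S : Finset (Fin n)) :
    FV.score (AV.addElection k L S) (AV.xc n) = k - 1 := by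
  unfold AV.addElection
  have h0 : FV.score ((S.sort (· ≤ ·)).map (AV.wballot L)) (AV.xc n) = 0 := by
    refine score_eq_zero _ _ (fun b hb => ?_)
    simp only [List.mem_map] at hb
    obtain ⟨i, _, rfl⟩ := hb
    simp [AV.wballot, AV.xc, AV.wc]
  rw [score_append, score_replicate, h0, if_pos (by simp)]
  omega

lemma score_w (L : Fin n → List (Fin n)) (S : Finset (Fin n)) :
    FV.score (AV.addElection k L S) (AV.wc n) = S.card := by
  unfold AV.addElection
  have h0 : FV.score ((S.sort (· ≤ ·)).map (AV.wballot L)) (AV.wc n)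
      = ((S.sort (· ≤ ·)).map (AV.wballot L)).length := by
    refine score_eq_length _ _ (fun b hb => ?_)
    simp only [List.mem_map] at hb
    obtain ⟨i, _, rfl⟩ := hb
    simp [AV.wballot]
  rw [score_append, score_replicate, h0, if_neg (by simp [AV.xc, AV.wc])]
  simp

lemma score_inl (L : Fin n → List (Fin n)) (S : Finset (Fin n)) (b : Fin n) :
    FV.score (AV.addElection k L S) (Sum.inl b) ≤ S.card := by
  unfold AV.addElection
  rw [score_append, score_replicate, if_neg (by simp [AV.xc])]
  simpa using score_wballots L S (Sum.inl b)

lemma ls1_x (L : Fin n → List (Fin n)) (S : Finset (Fin n)) :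
    k - 1 ≤ FV.levelScore (AV.addElection k L S) 1 (AV.xc n) := by
  unfold AV.addElection
  rw [levelScore_append, levelScore_replicate, if_pos (by simp)]
  exact Nat.le_add_right _ _

lemma ls1_w (L : Fin n → List (Fin n)) (S : Finset (Fin n)) :
    FV.levelScore (AV.addElection k L S) 1 (AV.wc n) ≤ S.card := by
  unfold AV.addElection
  rw [levelScore_append, levelScore_replicate, if_neg (by simp [AV.xc, AV.wc])]
  have h := levelScore_le_length ((S.sort (· ≤ ·)).map (AV.wballot L)) 1 (AV.wc n)
  simp only [List.length_map, Finset.length_sort] at h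
  omega

lemma card_univ_pos : 1 ≤ (Finset.univ : Finset (Sum (Fin n) Bool)).card := by
  simp [Finset.card_univ]

end AVP

/-- if adding a set `W'` (indexed by `S`) of at most `k`
unregistered voters makes `w` the unique fallback winner, then `‖W'‖ = k`
exactly; with `‖W'‖ ≤ k-2` candidate `x` has a strict majority at level 1,
and with `‖W'‖ = k-1` candidates `w` and `x` tie with overall score `k-1`
each, no candidate has a strict majority at any level, and `w` is not the
unique winner. -/
theorem fv_adding_voters_needs_exactly_k {n k : ℕ} (hk : 0 < k)
    (G : SimpleGraph (Fin n)) [DecidableRel G.Adj]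
    (L : Fin n → List (Fin n))
    (hnd : ∀ i, (L i).Nodup)
    (hmem : ∀ i b, b ∈ L i ↔ ¬ (b = i ∨ G.Adj i b)) :
    ∀ S : Finset (Fin n),
      (S.card ≤ k → FV.UniqueFVWinner Finset.univ (AV.addElection k L S) (AV.wc n) →
        S.card = k) ∧
      (S.card + 2 ≤ k → FV.MajAt (AV.addElection k L S) 1 (AV.xc n)) ∧
      (S.card + 1 = k →
        FV.score (AV.addElection k L S) (AV.wc n) = k - 1 ∧
        FV.score (AV.addElection k L S) (AV.xc n) = k - 1 ∧
        (∀ i c, ¬ FV.MajAt (AV.addElection k L S) i c) ∧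
        ¬ FV.UniqueFVWinner Finset.univ (AV.addElection k L S) (AV.wc n)) := by
  intro S
  set V := AV.addElection k L S with hV
  have hlen : V.length = (k - 1) + S.card := AVP.len_addElection L S
  have hsx : FV.score V (AV.xc n) = k - 1 := AVP.score_x L S
  have hsw : FV.score V (AV.wc n) = S.card := AVP.score_w L S
  have hsb : ∀ b, FV.score V (Sum.inl b) ≤ S.card := AVP.score_inl L S
  have hlss : ∀ i c, FV.levelScore V i c ≤ FV.score V c := AVP.ls_le_score V
  have hls1x : k - 1 ≤ FV.levelScore V 1 (AV.xc n) := AVP.ls1_x L S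
  have hls1w : FV.levelScore V 1 (AV.wc n) ≤ S.card := AVP.ls1_w L S
  -- part 2
  have part2 : S.card + 2 ≤ k → FV.MajAt V 1 (AV.xc n) := by
    intro h
    unfold FV.MajAt
    omega
  -- part 3
  have part3 : S.card + 1 = k →
      FV.score V (AV.wc n) = k - 1 ∧ FV.score V (AV.xc n) = k - 1 ∧
      (∀ i c, ¬ FV.MajAt V i c) ∧ ¬ FV.UniqueFVWinner Finset.univ V (AV.wc n) := by
    intro h
    have hscore_le : ∀ c, FV.score V c ≤ k - 1 := by
      rintro (b | (_ | _))
      · have := hsb b; omega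
      · show FV.score V (AV.xc n) ≤ k - 1; omega
      · show FV.score V (AV.wc n) ≤ k - 1; omega
    have hnomaj : ∀ i c, ¬ FV.MajAt V i c := by
      intro i c hm
      unfold FV.MajAt at hm
      have h1 := hlss i c
      have h2 := hscore_le c
      omega
    refine ⟨by omega, hsx, hnomaj, ?_⟩
    rintro ⟨_, huniq⟩
    have hxwin : FV.FVWinner Finset.univ V (AV.xc n) := by
      refine ⟨Finset.mem_univ _, Or.inr ⟨fun i _ d _ => hnomaj i d, fun d _ => ?_⟩⟩
      rw [hsx]; exact hscore_le d
    have := huniq _ hxwin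
    simp [AV.xc, AV.wc] at this
  refine ⟨?_, part2, part3⟩
  intro hle hwin
  by_contra hne
  rcases Nat.lt_or_ge (S.card + 1) k with hlt | hge
  · -- S.card + 2 ≤ k : x has level-1 majority, contradict w winning
    have hmx : FV.MajAt V 1 (AV.xc n) := part2 (by omega)
    obtain ⟨-, hw⟩ := hwin.1
    rcases hw with ⟨i, hi1, _, hmw, hpre, _⟩ | ⟨hno, _⟩
    · rcases Nat.lt_or_ge 1 i with h1i | h1i
      · exact hpre 1 h1i (AV.xc n) (Finset.mem_univ _) hmx
      · have hieq : i = 1 := by omega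
        subst hieq
        unfold FV.MajAt at hmw
        omega
    · exact hno 1 AVP.card_univ_pos (AV.xc n) (Finset.mem_univ _) hmx
  · -- S.card + 1 = k : no unique winner
    have h1 : S.card + 1 = k := by omega
    exact ((part3 h1).2.2.2) hwin
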